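/- Given a geometric classical r-matrix datum on A with V invariant under every a¹ᵢ and b¹ⱼ, define ρ: V* → Der(A) by ρ(y) = Σᵢ y(a⁰ᵢ)·a¹ᵢ + Σⱼ y(b⁰ⱼ)·b¹ⱼ. Then for all x,y ∈ V*: ρ(x⋆y) = [−Σₖ x(a⁰ₖ)·a¹ₖ, ρ(y)] in Der(A). -/
import Mathlib


open TensorProduct

set_option synthInstance.maxHeartbeats 1000000
set_option maxHeartbeats 1000000

/-- A *geometric classical r-matrix datum* on a commutative ℂ-algebra `A`:
finite families `a¹ᵢ, b¹ⱼ` of derivations and `a⁰ᵢ, b⁰ⱼ` of elements of `A`,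
each linearly independent over ℂ, satisfying the three components (E1)–(E3)
of the classical Yang–Baxter equation. -/
structure GeomRMatrixDatum (A : Type*) [CommRing A] [Algebra ℂ A] where
  m : ℕ
  n : ℕ
  a1 : Fin m → Derivation ℂ A A
  a0 : Fin m → A
  b1 : Fin n → Derivation ℂ A A
  b0 : Fin n → A
  indep_a1 : LinearIndependent ℂ a1
  indep_a0 : LinearIndependent ℂ a0
  indep_b1 : LinearIndependent ℂ b1
  indep_b0 : LinearIndependent ℂ b0
  E1 : ∑ i, ∑ k, (⁅a1 i, a1 k⁆ ⊗ₜ[ℂ] (a0 i ⊗ₜ[ℂ] a0 k))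
      = ∑ i, ∑ k, (a1 i ⊗ₜ[ℂ] ((a1 k) (a0 i) ⊗ₜ[ℂ] a0 k))
      + ∑ i, ∑ l, (a1 i ⊗ₜ[ℂ] (b0 l ⊗ₜ[ℂ] (b1 l) (a0 i)))
  E2 : ∑ j, ∑ k, ((a1 k) (b0 j) ⊗ₜ[ℂ] (b1 j ⊗ₜ[ℂ] a0 k))
      = ∑ j, ∑ k, (b0 j ⊗ₜ[ℂ] (⁅b1 j, a1 k⁆ ⊗ₜ[ℂ] a0 k))
      + ∑ j, ∑ k, (b0 j ⊗ₜ[ℂ] (a1 k ⊗ₜ[ℂ] (b1 j) (a0 k)))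
  E3 : ∑ i, ∑ l, ((a1 i) (b0 l) ⊗ₜ[ℂ] (a0 i ⊗ₜ[ℂ] b1 l))
      + ∑ j, ∑ l, (b0 j ⊗ₜ[ℂ] ((b1 j) (b0 l) ⊗ₜ[ℂ] b1 l))
      + ∑ j, ∑ l, (b0 j ⊗ₜ[ℂ] (b0 l ⊗ₜ[ℂ] ⁅b1 j, b1 l⁆)) = 0

variable {A : Type*} [CommRing A] [Algebra ℂ A]

/-- `V₁ = span_ℂ{a⁰ᵢ}`. -/
def GeomRMatrixDatum.V1 (D : GeomRMatrixDatum A) : Submodule ℂ A :=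
  Submodule.span ℂ (Set.range D.a0)

/-- `V₂ = span_ℂ{b⁰ⱼ}`. -/
def GeomRMatrixDatum.V2 (D : GeomRMatrixDatum A) : Submodule ℂ A :=
  Submodule.span ℂ (Set.range D.b0)

/-- `V = V₁ + V₂`. -/
def GeomRMatrixDatum.V (D : GeomRMatrixDatum A) : Submodule ℂ A := D.V1 ⊔ D.V2

theorem GeomRMatrixDatum.a0_mem_V (D : GeomRMatrixDatum A) (i : Fin D.m) :
    D.a0 i ∈ D.V :=
  Submodule.mem_sup_left (Submodule.subset_span (Set.mem_range_self i))

theorem GeomRMatrixDatum.b0_mem_V (D : GeomRMatrixDatum A) (j : Fin D.n) :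
    D.b0 j ∈ D.V :=
  Submodule.mem_sup_right (Submodule.subset_span (Set.mem_range_self j))

/-- The operation `(x⋆y)(f) = Σᵢ x(a⁰ᵢ)·y(a¹ᵢ f)` on `V* = Module.Dual ℂ V`. -/
noncomputable def starOp (D : GeomRMatrixDatum A)
    (hA : ∀ i : Fin D.m, ∀ f ∈ D.V, D.a1 i f ∈ D.V)
    (x y : Module.Dual ℂ D.V) : Module.Dual ℂ D.V :=
  ∑ i, x ⟨D.a0 i, D.a0_mem_V i⟩ • (y ∘ₗ ((D.a1 i).toLinearMap.restrict (hA i)))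

/-- The operation `(x∘y)(f) = Σⱼ y(b⁰ⱼ)·x(b¹ⱼ f)` on `V* = Module.Dual ℂ V`. -/
noncomputable def circOp (D : GeomRMatrixDatum A)
    (hB : ∀ j : Fin D.n, ∀ f ∈ D.V, D.b1 j f ∈ D.V)
    (x y : Module.Dual ℂ D.V) : Module.Dual ℂ D.V :=
  ∑ j, y ⟨D.b0 j, D.b0_mem_V j⟩ • (x ∘ₗ ((D.b1 j).toLinearMap.restrict (hB j)))

/-- The bracket `[x,y] = x∘y + y⋆x` on `V*`. -/
noncomputable def bracketOp (D : GeomRMatrixDatum A)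
    (hA : ∀ i : Fin D.m, ∀ f ∈ D.V, D.a1 i f ∈ D.V)
    (hB : ∀ j : Fin D.n, ∀ f ∈ D.V, D.b1 j f ∈ D.V)
    (x y : Module.Dual ℂ D.V) : Module.Dual ℂ D.V :=
  circOp D hB x y + starOp D hA y x

/-- The map `ρ : V* → Der(A)`, `ρ(x) = Σᵢ x(a⁰ᵢ)·a¹ᵢ + Σⱼ x(b⁰ⱼ)·b¹ⱼ`. -/
noncomputable def rhoOp (D : GeomRMatrixDatum A)
    (x : Module.Dual ℂ D.V) : Derivation ℂ A A :=
  ∑ i, x ⟨D.a0 i, D.a0_mem_V i⟩ • D.a1 i + ∑ j, x ⟨D.b0 j, D.b0_mem_V j⟩ • D.b1 j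




private lemma sum_lie' {L : Type*} [LieRing L] {ι : Type*} (s : Finset ι) (f : ι → L)
    (z : L) : ⁅∑ i ∈ s, f i, z⁆ = ∑ i ∈ s, ⁅f i, z⁆ :=
  map_sum (AddMonoidHom.mk' (fun x => ⁅x, z⁆) (fun a b => add_lie a b z)) f s

private lemma lie_sum' {L : Type*} [LieRing L] {ι : Type*} (s : Finset ι) (f : ι → L)
    (z : L) : ⁅z, ∑ i ∈ s, f i⁆ = ∑ i ∈ s, ⁅z, f i⁆ :=
  map_sum (AddMonoidHom.mk' (fun x => ⁅z, x⁆) (fun a b => lie_add z a b)) f s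

/-- `ρ(x⋆y) = [−Σₖ x(a⁰ₖ)·a¹ₖ, ρ(y)]` in `Der(A)`. -/
theorem rho_star_eq_bracket (D : GeomRMatrixDatum A)
    (hA : ∀ i : Fin D.m, ∀ f ∈ D.V, D.a1 i f ∈ D.V)
    (hB : ∀ j : Fin D.n, ∀ f ∈ D.V, D.b1 j f ∈ D.V)
    (x y : Module.Dual ℂ D.V) :
    rhoOp D (starOp D hA x y)
      = ⁅- ∑ k, x ⟨D.a0 k, D.a0_mem_V k⟩ • D.a1 k, rhoOp D y⁆ := by
  obtain ⟨x', hx'⟩ := LinearMap.exists_extend x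
  obtain ⟨y', hy'⟩ := LinearMap.exists_extend y
  have hx : ∀ (v : A) (h : v ∈ D.V), x ⟨v, h⟩ = x' v := fun v h =>
    (DFunLike.congr_fun hx' ⟨v, h⟩).symm
  have hy : ∀ (v : A) (h : v ∈ D.V), y ⟨v, h⟩ = y' v := fun v h =>
    (DFunLike.congr_fun hy' ⟨v, h⟩).symm
  have hyr : ∀ (k : Fin D.m) (z : D.V),
      y (((D.a1 k).toLinearMap.restrict (hA k)) z) = y' (D.a1 k z) := by
    intro k z
    have h0 := (DFunLike.congr_fun hy' (((D.a1 k).toLinearMap.restrict (hA k)) z)).symm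
    rw [h0]
    simp [LinearMap.restrict_coe_apply]
  set Der := Derivation ℂ A A
  let s : A ⊗[ℂ] A →ₗ[ℂ] ℂ := (TensorProduct.lid ℂ ℂ).toLinearMap ∘ₗ TensorProduct.map y' x'
  let Φ₁ : Der ⊗[ℂ] (A ⊗[ℂ] A) →ₗ[ℂ] Der :=
    (TensorProduct.rid ℂ Der).toLinearMap ∘ₗ LinearMap.lTensor Der s
  let inner : Der ⊗[ℂ] A →ₗ[ℂ] Der :=
    (TensorProduct.rid ℂ Der).toLinearMap ∘ₗ LinearMap.lTensor Der x'
  let Φ₂ : A ⊗[ℂ] (Der ⊗[ℂ] A) →ₗ[ℂ] Der :=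
    inner ∘ₗ (TensorProduct.lid ℂ (Der ⊗[ℂ] A)).toLinearMap ∘ₗ
      LinearMap.rTensor (Der ⊗[ℂ] A) y'
  have h1 := congrArg Φ₁ D.E1
  have h2 := congrArg Φ₂ D.E2
  simp only [Φ₁, Φ₂, inner, s, map_sum, map_add, map_smul, LinearMap.comp_apply,
    LinearMap.lTensor_tmul, LinearMap.rTensor_tmul, TensorProduct.map_tmul,
    LinearEquiv.coe_coe, TensorProduct.lid_tmul, TensorProduct.rid_tmul,
    smul_eq_mul, smul_smul] at h1 h2
  -- expand the left-hand side of the goal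
  have goalL : rhoOp D (starOp D hA x y)
      = (∑ i, ∑ k, (y' (D.a1 k (D.a0 i)) * x' (D.a0 k)) • D.a1 i)
        + ∑ j, ∑ k, (y' (D.a1 k (D.b0 j)) * x' (D.a0 k)) • D.b1 j := by
    rw [rhoOp]
    congr 1
    · refine Finset.sum_congr rfl fun i _ => ?_
      simp only [starOp, LinearMap.sum_apply, LinearMap.smul_apply, LinearMap.comp_apply,
        Finset.sum_smul, smul_eq_mul]
      refine Finset.sum_congr rfl fun k _ => ?_
      rw [hx, hyr, mul_comm (x' (D.a0 k))]
    · refine Finset.sum_congr rfl fun j _ => ?_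
      simp only [starOp, LinearMap.sum_apply, LinearMap.smul_apply, LinearMap.comp_apply,
        Finset.sum_smul, smul_eq_mul]
      refine Finset.sum_congr rfl fun k _ => ?_
      rw [hx, hyr, mul_comm (x' (D.a0 k))]
  -- expand the right-hand side of the goal
  have goalR : ⁅- ∑ k, x ⟨D.a0 k, D.a0_mem_V k⟩ • D.a1 k, rhoOp D y⁆
      = (∑ k, ∑ i, (y' (D.a0 i) * x' (D.a0 k)) • ⁅D.a1 i, D.a1 k⁆)
        + ∑ k, ∑ j, (y' (D.b0 j) * x' (D.a0 k)) • ⁅D.b1 j, D.a1 k⁆ := by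
    rw [neg_lie, ← lie_skew, neg_neg, lie_sum']
    refine Eq.trans (Finset.sum_congr rfl fun k _ => ?_) Finset.sum_add_distrib
    rw [rhoOp, lie_smul, add_lie, sum_lie', sum_lie', smul_add, Finset.smul_sum,
      Finset.smul_sum]
    congr 1
    · refine Finset.sum_congr rfl fun i _ => ?_
      rw [smul_lie, hx, hy, smul_smul, mul_comm (x' (D.a0 k))]
    · refine Finset.sum_congr rfl fun j _ => ?_
      rw [smul_lie, hx, hy, smul_smul, mul_comm (x' (D.a0 k))]
  have h2' : (∑ j, ∑ k, (y' (D.b0 j) * x' (D.a0 k)) • ⁅D.b1 j, D.a1 k⁆ : Der)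
      = (∑ j, ∑ k, (y' (D.a1 k (D.b0 j)) * x' (D.a0 k)) • D.b1 j)
        - ∑ j, ∑ k, (y' (D.b0 j) * x' (D.b1 j (D.a0 k))) • D.a1 k :=
    eq_sub_of_add_eq h2.symm
  have hXX : (∑ i : Fin D.m, ∑ l : Fin D.n, (y' (D.b0 l) * x' (D.b1 l (D.a0 i))) • D.a1 i : Der)
      = ∑ j : Fin D.n, ∑ k : Fin D.m, (y' (D.b0 j) * x' (D.b1 j (D.a0 k))) • D.a1 k :=
    Finset.sum_comm
  have h1c : (∑ k : Fin D.m, ∑ i : Fin D.m, (y' (D.a0 i) * x' (D.a0 k)) • ⁅D.a1 i, D.a1 k⁆ : Der)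
      = ∑ i : Fin D.m, ∑ k : Fin D.m, (y' (D.a0 i) * x' (D.a0 k)) • ⁅D.a1 i, D.a1 k⁆ :=
    Finset.sum_comm
  have h2c : (∑ k : Fin D.m, ∑ j : Fin D.n, (y' (D.b0 j) * x' (D.a0 k)) • ⁅D.b1 j, D.a1 k⁆ : Der)
      = ∑ j : Fin D.n, ∑ k : Fin D.m, (y' (D.b0 j) * x' (D.a0 k)) • ⁅D.b1 j, D.a1 k⁆ :=
    Finset.sum_comm
  rw [goalL, goalR, h1c, h1, h2c, h2', hXX]
  abel
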